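/- Suppose a ∈ (-1/2, 1/2), q ∈ ℕ is even, p is coprime to q, φ₀ = 0, and C_a = 2pπ/q. Then φ(a, qπ/2 - s) = -φ(a, s) + pπ for all s, and consequently f_a(qπ/2 - s) = -f_a(s) for all s ∈ ℝ; in particular f_a(qπ/4) = 0. -/

import Mathlib

open Real MeasureTheory intervalIntegral

noncomputable def psi (a t : ℝ) : ℝ :=
  Real.sqrt (1/4 - a^2) /
    (Real.sqrt (1/2 + a * Real.cos (2*t)) * (1/2 - a * Real.cos (2*t)))

noncomputable def phi (a phi0 s : ℝ) : ℝ := phi0 + ∫ t in (0:ℝ)..s, psi a t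

noncomputable def Ca (a : ℝ) : ℝ := ∫ t in (0:ℝ)..Real.pi, psi a t

noncomputable def xa (a phi0 s : ℝ) : ℝ :=
  Real.sqrt (1/2 - a * Real.cos (2*s)) * Real.cos (phi a phi0 s)

noncomputable def ya (a phi0 s : ℝ) : ℝ :=
  Real.sqrt (1/2 - a * Real.cos (2*s)) * Real.sin (phi a phi0 s)

noncomputable def za (a s : ℝ) : ℝ := Real.sqrt (1/2 + a * Real.cos (2*s))

noncomputable def fa (a phi0 s : ℝ) : ℝ :=
  a * Real.sin (2*s) * Real.sin (phi a phi0 s) +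
    Real.sqrt (1/4 - a^2) * Real.sqrt (1/2 + a * Real.cos (2*s)) * Real.cos (phi a phi0 s)

section aux

variable {a : ℝ}

lemma abs_cos_term_lt (ha : |a| < 1/2) (t : ℝ) : |a * Real.cos (2*t)| < 1/2 := by
  have h1 := Real.abs_cos_le_one (2*t)
  have h2 := abs_nonneg a
  calc |a * Real.cos (2*t)| = |a| * |Real.cos (2*t)| := abs_mul _ _
    _ ≤ |a| * 1 := by nlinarith
    _ < 1/2 := by linarith

lemma pos1 (ha : |a| < 1/2) (t : ℝ) : 0 < 1/2 + a * Real.cos (2*t) := by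
  have := abs_lt.1 (abs_cos_term_lt ha t); linarith [this.1]

lemma pos2 (ha : |a| < 1/2) (t : ℝ) : 0 < 1/2 - a * Real.cos (2*t) := by
  have := abs_lt.1 (abs_cos_term_lt ha t); linarith [this.2]

lemma psi_cont (ha : |a| < 1/2) : Continuous (psi a) := by
  apply Continuous.div continuous_const
  · fun_prop
  · intro t
    exact ne_of_gt (mul_pos (Real.sqrt_pos.2 (pos1 ha t)) (pos2 ha t))

lemma psi_intble (ha : |a| < 1/2) : ∀ s t : ℝ, IntervalIntegrable (psi a) volume s t :=
  fun s t => (psi_cont ha).intervalIntegrable s t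

lemma psi_pos (ha : |a| < 1/2) (t : ℝ) : 0 < psi a t := by
  have hnum : 0 < Real.sqrt (1/4 - a^2) := by
    apply Real.sqrt_pos.2
    nlinarith [abs_nonneg a, sq_abs a]
  exact div_pos hnum (mul_pos (Real.sqrt_pos.2 (pos1 ha t)) (pos2 ha t))

lemma psi_periodic : Function.Periodic (psi a) Real.pi := by
  intro t
  unfold psi
  rw [show 2*(t + Real.pi) = 2*t + 2*Real.pi by ring, Real.cos_add_two_pi]

lemma Ca_pos (ha : |a| < 1/2) : 0 < Ca a :=
  intervalIntegral_pos_of_pos (psi_intble ha 0 Real.pi) (fun t => psi_pos ha t) Real.pi_pos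

end aux

theorem stmt19 (a : ℝ) (ha : a ∈ Set.Ioo (-(1/2) : ℝ) (1/2)) (p q : ℕ)
    (hq : Even q) (hpq : Nat.Coprime p q)
    (hCa : Ca a = 2 * p * Real.pi / q) :
    (∀ s : ℝ, phi a 0 (q * Real.pi / 2 - s) = -(phi a 0 s) + p * Real.pi) ∧
    (∀ s : ℝ, fa a 0 (q * Real.pi / 2 - s) = -(fa a 0 s)) ∧
    fa a 0 (q * Real.pi / 4) = 0 := by
  have ha' : |a| < 1/2 := abs_lt.2 ⟨by linarith [ha.1], ha.2⟩
  obtain ⟨k, hk⟩ := hq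
  have hq2 : q = 2 * k := by omega
  have hq0 : q ≠ 0 := by
    intro h
    rw [h] at hCa
    simp at hCa
    linarith [Ca_pos ha']
  have hk0 : k ≠ 0 := by omega
  have hkR : (k:ℝ) ≠ 0 := Nat.cast_ne_zero.2 hk0
  have hqR : (q:ℝ) = 2 * k := by rw [hq2]; push_cast; ring
  have hp : Odd p := by
    rcases Nat.even_or_odd p with he | ho
    · exfalso
      have : 2 ∣ Nat.gcd p q := Nat.dvd_gcd he.two_dvd ⟨k, hq2⟩
      rw [hpq] at this
      omega
    · exact ho
  -- psi symmetry about the reflection point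
  have psi_sym : ∀ t : ℝ, psi a ((q:ℝ) * Real.pi / 2 - t) = psi a t := by
    intro t
    unfold psi
    rw [show 2*((q:ℝ) * Real.pi / 2 - t) = (k:ℝ)*(2*Real.pi) - 2*t by rw [hqR]; ring,
      Real.cos_nat_mul_two_pi_sub]
  -- integral over half the full range
  have hIX : (∫ t in (0:ℝ)..(q:ℝ) * Real.pi / 2, psi a t) = (p:ℝ) * Real.pi := by
    have hper := psi_periodic.intervalIntegral_add_zsmul_eq (k:ℤ) 0 (psi_intble ha')
    simp only [zero_add, zsmul_eq_mul, Int.cast_natCast] at hper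
    rw [show (q:ℝ) * Real.pi / 2 = (k:ℝ) * Real.pi by rw [hqR]; ring, hper]
    rw [show (∫ t in (0:ℝ)..Real.pi, psi a t) = Ca a from rfl, hCa, hqR]
    field_simp
  have key1 : ∀ s : ℝ, phi a 0 ((q:ℝ) * Real.pi / 2 - s) = -(phi a 0 s) + (p:ℝ) * Real.pi := by
    intro s
    set X : ℝ := (q:ℝ) * Real.pi / 2 with hX
    have h1 : (∫ t in (0:ℝ)..s, psi a t) = ∫ t in (X - s)..X, psi a t := by
      have : (∫ t in (0:ℝ)..s, psi a t) = ∫ t in (0:ℝ)..s, psi a (X - t) := by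
        simp only [psi_sym]
      rw [this, intervalIntegral.integral_comp_sub_left (psi a) X, sub_zero]
    have h2 : (∫ t in (0:ℝ)..X, psi a t) - (∫ t in (0:ℝ)..(X - s), psi a t)
        = ∫ t in (X - s)..X, psi a t :=
      intervalIntegral.integral_interval_sub_left (psi_intble ha' 0 X) (psi_intble ha' 0 (X - s))
    unfold phi
    rw [zero_add, zero_add]
    linarith [h1, h2, hIX]
  have key2 : ∀ s : ℝ, fa a 0 ((q:ℝ) * Real.pi / 2 - s) = -(fa a 0 s) := by
    intro s
    have hsin2 : Real.sin (2*((q:ℝ) * Real.pi / 2 - s)) = -Real.sin (2*s) := by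
      rw [show 2*((q:ℝ) * Real.pi / 2 - s) = (q:ℝ)*Real.pi - 2*s by ring,
        Real.sin_nat_mul_pi_sub, Even.neg_one_pow ⟨k, hk⟩]
      ring
    have hcos2 : Real.cos (2*((q:ℝ) * Real.pi / 2 - s)) = Real.cos (2*s) := by
      rw [show 2*((q:ℝ) * Real.pi / 2 - s) = (q:ℝ)*Real.pi - 2*s by ring,
        Real.cos_nat_mul_pi_sub, Even.neg_one_pow ⟨k, hk⟩]
      ring
    have hphi : phi a 0 ((q:ℝ) * Real.pi / 2 - s) = (p:ℝ)*Real.pi - phi a 0 s := by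
      rw [key1 s]; ring
    have hsinφ : Real.sin (phi a 0 ((q:ℝ) * Real.pi / 2 - s)) = Real.sin (phi a 0 s) := by
      rw [hphi, Real.sin_nat_mul_pi_sub, Odd.neg_one_pow hp]; ring
    have hcosφ : Real.cos (phi a 0 ((q:ℝ) * Real.pi / 2 - s)) = -Real.cos (phi a 0 s) := by
      rw [hphi, Real.cos_nat_mul_pi_sub, Odd.neg_one_pow hp]; ring
    unfold fa
    rw [hsin2, hcos2, hsinφ, hcosφ]
    ring
  refine ⟨key1, key2, ?_⟩
  have := key2 ((q:ℝ) * Real.pi / 4)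
  rw [show (q:ℝ) * Real.pi / 2 - (q:ℝ) * Real.pi / 4 = (q:ℝ) * Real.pi / 4 by ring] at this
  linarith
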